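/- For a nonzero real binary quartic Q, the Hessian covariant H_Q is identically zero if and only if Q = c·ℓ⁴ for some real number c ≠ 0 and some nonzero real linear form ℓ(X,Y), i.e., if and only if Q has a quadruple root. -/

import Mathlib

/-- The real binary quartic `Q(X,Y) = aX⁴ + bX³Y + cX²Y² + dXY³ + eY⁴` as a
function of two real variables. -/
def Qf (a b c d e : ℝ) : ℝ → ℝ → ℝ := fun X Y =>
  a * X ^ 4 + b * X ^ 3 * Y + c * X ^ 2 * Y ^ 2 + d * X * Y ^ 3 + e * Y ^ 4

/-- The Hessian covariant `H_Q = Q_XX·Q_YY − (Q_XY)²` of the binary quartic. -/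
noncomputable def HessQ (a b c d e : ℝ) (X Y : ℝ) : ℝ :=
  deriv (fun x => deriv (fun x' => Qf a b c d e x' Y) x) X *
    deriv (fun y => deriv (fun y' => Qf a b c d e X y') y) Y -
  (deriv (fun y => deriv (fun x => Qf a b c d e x y) X) Y) ^ 2

lemma hasDerivAt_quartic (p q r s t x : ℝ) :
    HasDerivAt (fun u : ℝ => p * u ^ 4 + q * u ^ 3 + r * u ^ 2 + s * u + t)
      (4 * p * x ^ 3 + 3 * q * x ^ 2 + 2 * r * x + s) x := by
  have h4 := (hasDerivAt_pow 4 x).const_mul p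
  have h3 := (hasDerivAt_pow 3 x).const_mul q
  have h2 := (hasDerivAt_pow 2 x).const_mul r
  have h1 := (hasDerivAt_id x).const_mul s
  have := (((h4.add h3).add h2).add h1).add_const t
  exact this.congr_deriv (by push_cast; ring)

lemma deriv_quartic (p q r s t : ℝ) :
    deriv (fun u : ℝ => p * u ^ 4 + q * u ^ 3 + r * u ^ 2 + s * u + t)
      = fun x => 4 * p * x ^ 3 + 3 * q * x ^ 2 + 2 * r * x + s :=
  funext fun x => (hasDerivAt_quartic p q r s t x).deriv

lemma hessEq (a b c d e X Y : ℝ) :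
    HessQ a b c d e X Y =
      (24*a*c - 9*b^2) * X^4 + (72*a*d - 12*b*c) * X^3*Y
        + (144*a*e + 18*b*d - 12*c^2) * X^2*Y^2
        + (72*b*e - 12*c*d) * X*Y^3 + (24*c*e - 9*d^2) * Y^4 := by
  have hx1 : ∀ Y : ℝ, (fun x' => Qf a b c d e x' Y)
      = (fun u : ℝ => a*u^4 + (b*Y)*u^3 + (c*Y^2)*u^2 + (d*Y^3)*u + e*Y^4) := by
    intro Y; funext u; simp only [Qf]; ring
  have hy1 : (fun y' => Qf a b c d e X y')
      = (fun u : ℝ => e*u^4 + (d*X)*u^3 + (c*X^2)*u^2 + (b*X^3)*u + a*X^4) := by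
    funext u; simp only [Qf]; ring
  have QXX : deriv (fun x => deriv (fun x' => Qf a b c d e x' Y) x) X
      = 12*a*X^2 + 6*b*X*Y + 2*c*Y^2 := by
    have h1 : (fun x => deriv (fun x' => Qf a b c d e x' Y) x)
        = fun u : ℝ => 0*u^4 + (4*a)*u^3 + (3*(b*Y))*u^2 + (2*(c*Y^2))*u + d*Y^3 := by
      funext u
      rw [hx1 Y]
      simp only [deriv_quartic]
      ring
    rw [h1]
    simp only [deriv_quartic]
    ring
  have QYY : deriv (fun y => deriv (fun y' => Qf a b c d e X y') y) Y
      = 12*e*Y^2 + 6*d*X*Y + 2*c*X^2 := by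
    have h1 : (fun y => deriv (fun y' => Qf a b c d e X y') y)
        = fun u : ℝ => 0*u^4 + (4*e)*u^3 + (3*(d*X))*u^2 + (2*(c*X^2))*u + b*X^3 := by
      funext u
      rw [hy1]
      simp only [deriv_quartic]
      ring
    rw [h1]
    simp only [deriv_quartic]
    ring
  have QXY : deriv (fun y => deriv (fun x => Qf a b c d e x y) X) Y
      = 3*b*X^2 + 4*c*X*Y + 3*d*Y^2 := by
    have h1 : (fun y => deriv (fun x => Qf a b c d e x y) X)
        = fun u : ℝ => 0*u^4 + d*u^3 + (2*c*X)*u^2 + (3*b*X^2)*u + 4*a*X^3 := by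
      funext u
      rw [hx1 u]
      simp only [deriv_quartic]
      ring
    rw [h1]
    simp only [deriv_quartic]
    ring
  unfold HessQ
  rw [QXX, QYY, QXY]
  ring

/-- The Hessian covariant of a nonzero real binary quartic vanishes identically
iff the quartic is a nonzero multiple of the fourth power of a real linear
form, i.e. iff it has a quadruple root. -/
theorem hessian_zero_iff_fourth_power
    (a b c d e : ℝ) (hQ : ¬(a = 0 ∧ b = 0 ∧ c = 0 ∧ d = 0 ∧ e = 0)) :
    (∀ X Y : ℝ, HessQ a b c d e X Y = 0) ↔
    ∃ c0 p q : ℝ, c0 ≠ 0 ∧ (p, q) ≠ (0, 0) ∧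
      ∀ X Y : ℝ, Qf a b c d e X Y = c0 * (p * X + q * Y) ^ 4 := by
  constructor
  · intro hH
    have H1 := hH 1 0; have H2 := hH 0 1; have H3 := hH 1 1
    have H4 := hH 1 (-1); have H5 := hH 2 1
    rw [hessEq] at H1 H2 H3 H4 H5
    norm_num at H1 H2 H3 H4 H5
    -- coefficient equations
    have hA : 24*a*c - 9*b^2 = 0 := by linear_combination H1
    have hE : 24*c*e - 9*d^2 = 0 := by linear_combination H2
    have hC : 144*a*e + 18*b*d - 12*c^2 = 0 := by
      linear_combination (H3 + H4)/2 - H1 - H2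
    have hB : 72*a*d - 12*b*c = 0 := by
      linear_combination (H5 - 12*H1 + 3*H2 - 3*H3 - H4)/6
    have hD : 72*b*e - 12*c*d = 0 := by
      linear_combination 2*H1 - H2/2 + H3 - H4/3 - H5/6
    by_cases ha : a = 0
    · subst ha
      have hb : b = 0 := by nlinarith [sq_nonneg b]
      subst hb
      have hc : c = 0 := by nlinarith [sq_nonneg c]
      subst hc
      have hd : d = 0 := by nlinarith [sq_nonneg d]
      subst hd
      have he : e ≠ 0 := by
        intro h; exact hQ ⟨rfl, rfl, rfl, rfl, h⟩
      refine ⟨e, 0, 1, he, by simp, ?_⟩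
      intro X Y; simp only [Qf]; ring
    · refine ⟨a, 1, b/(4*a), ha, by simp, ?_⟩
      have hc : 8*a*c = 3*b^2 := by linear_combination hA/3
      have hd2 : 16*a^2*d = b^3 := by
        linear_combination (2*a/9)*hB + (b/3)*hc
      have he2 : 256*a^3*e = b^4 := by
        linear_combination (16*a^2/9)*hC - 2*b*hd2 + (8*a*c/3 + b^2)*hc
      have hcv : c = 3*b^2/(8*a) := by field_simp; linear_combination hc
      have hdv : d = b^3/(16*a^2) := by field_simp; linear_combination hd2
      have hev : e = b^4/(256*a^3) := by field_simp; linear_combination he2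
      intro X Y
      simp only [Qf]
      rw [hcv, hdv, hev]
      field_simp
      ring
  · rintro ⟨c0, p, q, hc0, hpq, h⟩
    have E1 := h 1 0; have E2 := h 0 1; have E3 := h 1 1
    have E4 := h 1 (-1); have E5 := h 2 1
    simp only [Qf] at E1 E2 E3 E4 E5
    norm_num at E1 E2 E3 E4 E5
    have ha : a = c0 * p^4 := by linear_combination E1
    have he : e = c0 * q^4 := by linear_combination E2
    have hc : c = 6 * c0 * p^2 * q^2 := by
      linear_combination (E3 + E4)/2 - E1 - E2
    have hb : b = 4 * c0 * p^3 * q := by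
      linear_combination (E5 - 12*E1 + 3*E2 - 3*E3 - E4)/6
    have hd : d = 4 * c0 * p * q^3 := by
      linear_combination 2*E1 - E2/2 + E3 - E4/3 - E5/6
    intro X Y
    rw [hessEq, ha, hb, hc, hd, he]
    ring
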